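/- Let A be an algebra and a(z), b(z) formal distributions over A with a(w)b(z)(w−z)^N = 0. Then the formal derivatives satisfy (∂a)(w) b(z) (w−z)^{N+1} = 0 and a(w)(∂b)(z)(w−z)^{N+1} = 0, i.e., locality is preserved under formal differentiation with locality value increasing by at most 1. -/

import Mathlib

variable {A : Type*} [NonUnitalNonAssocRing A]

/-- Multiplication of a formal distribution in two variables `w, z`
(given by its coefficients: `c n m` is the coefficient at `w^{−n−1} z^{−m−1}`)
by `(w − z)`. -/
def wzMul (c : ℤ → ℤ → A) : ℤ → ℤ → A := fun n m => c (n + 1) m - c n (m + 1)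

/-- The formal derivative `∂a` of a distribution `a(z) = Σₙ aₙ z^{−n−1}`:
`(∂a)ₙ = −n • a_{n−1}`. -/
def fder (a : ℤ → A) : ℤ → A := fun n => (-n) • a (n - 1)

/-- Derivative in `w` on coefficients. -/
def Dw (c : ℤ → ℤ → A) : ℤ → ℤ → A := fun n m => (-n) • c (n - 1) m

/-- Derivative in `z` on coefficients. -/
def Dz (c : ℤ → ℤ → A) : ℤ → ℤ → A := fun n m => (-m) • c n (m - 1)

lemma wzMul_zero : wzMul (0 : ℤ → ℤ → A) = 0 := by
  funext n m; simp [wzMul]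

lemma wzMul_neg (c : ℤ → ℤ → A) : wzMul (-c) = -wzMul c := by
  funext n m; simp [wzMul]; abel

lemma wzMul_nsmul (k : ℕ) (c : ℤ → ℤ → A) : wzMul (k • c) = k • wzMul c := by
  funext n m; simp [wzMul, smul_sub]

lemma Dw_zero : Dw (0 : ℤ → ℤ → A) = 0 := by
  funext n m; simp [Dw]

lemma Dz_zero : Dz (0 : ℤ → ℤ → A) = 0 := by
  funext n m; simp [Dz]

lemma wzMul_iter_neg (k : ℕ) (c : ℤ → ℤ → A) :
    wzMul^[k] (-c) = -wzMul^[k] c := by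
  induction k generalizing c with
  | zero => simp
  | succ j ih =>
    rw [Function.iterate_succ_apply, Function.iterate_succ_apply, wzMul_neg, ih]

lemma wzMul_iter_add (k : ℕ) (x y : ℤ → ℤ → A) :
    wzMul^[k] (x + y) = wzMul^[k] x + wzMul^[k] y := by
  induction k generalizing x y with
  | zero => simp
  | succ j ih =>
    rw [Function.iterate_succ_apply, Function.iterate_succ_apply,
      Function.iterate_succ_apply]
    rw [show wzMul (x + y) = wzMul x + wzMul y from by
      funext n m; simp [wzMul]; abel]
    exact ih _ _

lemma Dw_wzMul (c : ℤ → ℤ → A) : Dw (wzMul c) = wzMul (Dw c) + c := by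
  funext n m
  simp only [Dw, wzMul, Pi.add_apply, smul_sub]
  rw [show (n : ℤ) - 1 + 1 = n by ring, show (n : ℤ) + 1 - 1 = n by ring]
  have key : (-(n + 1)) • c n m = (-n) • c n m - c n m := by
    rw [sub_eq_add_neg, ← neg_one_smul ℤ (c n m), ← add_smul]; ring_nf
  rw [key]; abel

lemma Dz_wzMul (c : ℤ → ℤ → A) : Dz (wzMul c) = wzMul (Dz c) - c := by
  funext n m
  simp only [Dz, wzMul, Pi.sub_apply, smul_sub]
  rw [show (m : ℤ) - 1 + 1 = m by ring, show (m : ℤ) + 1 - 1 = m by ring]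
  have key : (-(m + 1)) • c n m = (-m) • c n m - c n m := by
    rw [sub_eq_add_neg, ← neg_one_smul ℤ (c n m), ← add_smul]; ring_nf
  rw [key]; abel

lemma Dw_iter (N : ℕ) (c : ℤ → ℤ → A) :
    Dw (wzMul^[N] c) = wzMul^[N] (Dw c) + N • wzMul^[N - 1] c := by
  induction N generalizing c with
  | zero => simp
  | succ k ih =>
    rw [Function.iterate_succ_apply, ih (wzMul c), Dw_wzMul, wzMul_iter_add,
      ← Function.iterate_succ_apply]
    cases k with
    | zero => simp
    | succ j =>
      simp only [Nat.add_sub_cancel]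
      rw [← Function.iterate_succ_apply wzMul j c,
        show j + 1 + 1 = (j + 1) + 1 from rfl, add_nsmul _ (j + 1) 1, one_nsmul]
      simp only [Nat.succ_eq_add_one]
      abel

lemma Dz_iter (N : ℕ) (c : ℤ → ℤ → A) :
    Dz (wzMul^[N] c) = wzMul^[N] (Dz c) - N • wzMul^[N - 1] c := by
  induction N generalizing c with
  | zero => simp
  | succ k ih =>
    have hsub : wzMul^[k] (wzMul (Dz c) - c)
        = wzMul^[k] (wzMul (Dz c)) - wzMul^[k] c := by
      rw [sub_eq_add_neg, wzMul_iter_add, sub_eq_add_neg, wzMul_iter_neg]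
    rw [Function.iterate_succ_apply, ih (wzMul c), Dz_wzMul, hsub,
      ← Function.iterate_succ_apply]
    cases k with
    | zero => simp
    | succ j =>
      simp only [Nat.add_sub_cancel]
      rw [← Function.iterate_succ_apply wzMul j c,
        show j + 1 + 1 = (j + 1) + 1 from rfl, add_nsmul _ (j + 1) 1, one_nsmul]
      simp only [Nat.succ_eq_add_one]
      abel

lemma key (N : ℕ) (c : ℤ → ℤ → A) (h : wzMul^[N] c = 0)
    (D : (ℤ → ℤ → A) → (ℤ → ℤ → A)) (hD0 : D 0 = 0)
    (hDi : D (wzMul^[N] c) = wzMul^[N] (D c) + N • wzMul^[N - 1] c ∨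
           D (wzMul^[N] c) = wzMul^[N] (D c) - N • wzMul^[N - 1] c) :
    wzMul^[N + 1] (D c) = 0 := by
  cases N with
  | zero =>
    simp only [Function.iterate_zero, id_eq] at h
    subst h
    rw [hD0]
    simp [wzMul_zero]
  | succ k =>
    have hk : wzMul^[k + 1] (D c) = -((k + 1) • wzMul^[k] c) ∨
        wzMul^[k + 1] (D c) = (k + 1) • wzMul^[k] c := by
      rcases hDi with hd | hd <;> rw [h, hD0] at hd <;>
        simp only [Nat.add_sub_cancel] at hd
      · exact Or.inl (eq_neg_of_add_eq_zero_left hd.symm)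
      · exact Or.inr (sub_eq_zero.mp hd.symm)
    have hzero : wzMul ((k + 1) • wzMul^[k] c) = 0 := by
      rw [wzMul_nsmul, ← Function.iterate_succ_apply' wzMul k c, h]
      simp
    rw [Function.iterate_succ_apply']
    rcases hk with hk | hk <;> rw [hk]
    · rw [wzMul_neg, hzero, neg_zero]
    · exact hzero

/-- If `a(w) b(z) (w−z)^N = 0`, then
`(∂a)(w) b(z) (w−z)^{N+1} = 0` and `a(w) (∂b)(z) (w−z)^{N+1} = 0`:
locality is preserved under formal differentiation, with the locality value
increasing by at most 1. -/
theorem stmt_3 (a b : ℤ → A) (N : ℕ)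
    (h : wzMul^[N] (fun n m => a n * b m) = 0) :
    wzMul^[N + 1] (fun n m => fder a n * b m) = 0 ∧
    wzMul^[N + 1] (fun n m => a n * fder b m) = 0 := by
  set c : ℤ → ℤ → A := fun n m => a n * b m with hc
  have h1 : (fun n m => fder a n * b m) = Dw c := by
    funext n m; simp [fder, Dw, smul_mul_assoc, c]
  have h2 : (fun n m => a n * fder b m) = Dz c := by
    funext n m; simp [fder, Dz, mul_smul_comm, c]
  rw [h1, h2]
  exact ⟨key N c h Dw Dw_zero (Or.inl (Dw_iter N c)),
    key N c h Dz Dz_zero (Or.inr (Dz_iter N c))⟩
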